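/- Let G₁ and G₂ be groups and let H be a subgroup of G₁ × G₂ such that both coordinate projections H → G₁ and H → G₂ are surjective. Suppose that G₂ is solvable and that G₁ admits a unique maximal proper normal subgroup N such that the quotient G₁/N is non-solvable. Then H = G₁ × G₂. -/

import Mathlib

theorem stmt_5 {G₁ G₂ : Type*} [Group G₁] [Group G₂] [Group.IsSolvable G₂]
    (H : Subgroup (G₁ × G₂))
    (h1 : Subgroup.map (MonoidHom.fst G₁ G₂) H = ⊤)
    (h2 : Subgroup.map (MonoidHom.snd G₁ G₂) H = ⊤)
    (N : Subgroup G₁) [N.Normal] (hNtop : N ≠ ⊤)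
    (hmax : ∀ M : Subgroup G₁, M.Normal → M ≠ ⊤ → M ≤ N)
    (hns : ¬ IsSolvable (G₁ ⧸ N)) :
    H = ⊤ := by
  -- surjectivity of projections
  have hfst : ∀ g₁ : G₁, ∃ g₂ : G₂, (g₁, g₂) ∈ H := by
    intro g₁
    have : g₁ ∈ Subgroup.map (MonoidHom.fst G₁ G₂) H := h1 ▸ Subgroup.mem_top g₁
    obtain ⟨⟨a, b⟩, hab, rfl⟩ := this
    exact ⟨b, hab⟩
  have hsnd : ∀ g₂ : G₂, ∃ g₁ : G₁, (g₁, g₂) ∈ H := by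
    intro g₂
    have : g₂ ∈ Subgroup.map (MonoidHom.snd G₁ G₂) H := h2 ▸ Subgroup.mem_top g₂
    obtain ⟨⟨a, b⟩, hab, rfl⟩ := this
    exact ⟨a, hab⟩
  -- N₁ = kernel of projection to G₂, viewed in G₁
  set N₁ : Subgroup G₁ := H.comap (MonoidHom.inl G₁ G₂) with hN₁
  have memN₁ : ∀ g : G₁, g ∈ N₁ ↔ (g, 1) ∈ H := fun g => Iff.rfl
  have hN₁norm : N₁.Normal := by
    constructor
    intro n hn g
    obtain ⟨g₂, hg⟩ := hfst g
    have : (g, g₂) * (n, 1) * (g, g₂)⁻¹ ∈ H := H.mul_mem (H.mul_mem hg hn) (H.inv_mem hg)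
    simpa [memN₁] using this
  -- Case split on N₁ = ⊤
  by_cases htop : N₁ = ⊤
  · -- G₁ × 1 ≤ H, and snd surjective ⇒ H = ⊤
    rw [Subgroup.eq_top_iff']
    rintro ⟨a, b⟩
    obtain ⟨c, hc⟩ := hsnd b
    have h1' : (a * c⁻¹, (1 : G₂)) ∈ H := by
      have : a * c⁻¹ ∈ N₁ := htop ▸ Subgroup.mem_top _
      exact this
    have := H.mul_mem h1' hc
    simpa using this
  · -- N₁ ≤ N, and G₁ ⧸ N₁ is solvable since it's a quotient of G₂
    exfalso
    haveI := hN₁norm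
    -- homomorphisms from H
    have hN₁N : N₁ ≤ N := hmax N₁ hN₁norm htop
    let φ : H →* G₁ ⧸ N₁ := (QuotientGroup.mk' N₁).comp ((MonoidHom.fst G₁ G₂).comp H.subtype)
    let σ : H →* G₂ := (MonoidHom.snd G₁ G₂).comp H.subtype
    have hσsurj : Function.Surjective σ := by
      intro g₂
      obtain ⟨g₁, hg⟩ := hsnd g₂
      exact ⟨⟨(g₁, g₂), hg⟩, rfl⟩
    have hφsurj : Function.Surjective φ := by
      intro x
      obtain ⟨g₁, rfl⟩ := QuotientGroup.mk'_surjective N₁ x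
      obtain ⟨g₂, hg⟩ := hfst g₁
      exact ⟨⟨(g₁, g₂), hg⟩, rfl⟩
    have hker : σ.ker ≤ φ.ker := by
      rintro ⟨⟨a, b⟩, hab⟩ hx
      have hb : b = 1 := hx
      subst hb
      have : a ∈ N₁ := hab
      simpa [φ, MonoidHom.mem_ker, QuotientGroup.eq_one_iff] using this
    -- G₂ ≃ H ⧸ ker σ  →*  G₁ ⧸ N₁
    let e := (QuotientGroup.quotientKerEquivOfSurjective σ hσsurj).symm
    let ψ : G₂ →* G₁ ⧸ N₁ := (QuotientGroup.lift σ.ker φ hker).comp e.toMonoidHom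
    have hψsurj : Function.Surjective ψ := by
      intro x
      obtain ⟨h, rfl⟩ := hφsurj x
      refine ⟨σ h, ?_⟩
      have h1 : (QuotientGroup.quotientKerEquivOfSurjective σ hσsurj)
          (QuotientGroup.mk h) = σ h := rfl
      show (QuotientGroup.lift σ.ker φ hker) (e (σ h)) = φ h
      rw [show e (σ h) = QuotientGroup.mk h from h1 ▸ (QuotientGroup.quotientKerEquivOfSurjective σ hσsurj).symm_apply_apply _]
      rfl
    haveI : Group.IsSolvable (G₁ ⧸ N₁) := solvable_of_surjective hψsurj
    -- G₁ ⧸ N is a quotient of G₁ ⧸ N₁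
    let π : G₁ ⧸ N₁ →* G₁ ⧸ N :=
      QuotientGroup.map N₁ N (MonoidHom.id G₁) (by simpa using hN₁N)
    have hπsurj : Function.Surjective π := by
      intro x
      obtain ⟨g, rfl⟩ := QuotientGroup.mk'_surjective N x
      exact ⟨QuotientGroup.mk g, rfl⟩
    exact hns (solvable_of_surjective hπsurj)
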